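/- Let n ≥ 2 and let X ∈ GL(n, K̄) satisfy (Ad_{X⁻¹σ(X)} ⊗ Ad_{X⁻¹σ(X)})(r_DJ) = r_DJ for every σ ∈ Gal(K̄/K), where r_DJ is the Drinfeld–Jimbo r-matrix in Mₙ(K̄) ⊗ Mₙ(K̄). Then there exist Q ∈ GL(n, K̄) with all entries in the image of K, and C ∈ GL(n, K̄) with (Ad_C ⊗ Ad_C)(r_DJ) = r_DJ, such that X = Q·C. (Triviality of the Belavin–Drinfeld cohomology H¹_BD(r_DJ) for sl(n).) -/

import Mathlib

open scoped TensorProduct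

noncomputable section

/-- `K = ℂ((ℏ))`, the field of formal Laurent series over `ℂ`. -/
abbrev K : Type := LaurentSeries ℂ

/-- A fixed algebraic closure of `K`. -/
abbrev Kbar : Type := AlgebraicClosure K

/-- Conjugation `a ↦ X a X⁻¹` as a linear endomorphism of `Mₙ(F)`. -/
def conjLin (F : Type*) [Field F] {n : ℕ} (X : Matrix (Fin n) (Fin n) F) :
    Matrix (Fin n) (Fin n) F →ₗ[F] Matrix (Fin n) (Fin n) F :=
  (LinearMap.mulLeft F X).comp (LinearMap.mulRight F X⁻¹)

/-- The operator `Ad_X ⊗ Ad_X : a ⊗ b ↦ (X a X⁻¹) ⊗ (X b X⁻¹)` on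
`Mₙ(F) ⊗_F Mₙ(F)`. -/
def AdT (F : Type*) [Field F] {n : ℕ} (X : Matrix (Fin n) (Fin n) F) :
    (Matrix (Fin n) (Fin n) F ⊗[F] Matrix (Fin n) (Fin n) F) →ₗ[F]
      (Matrix (Fin n) (Fin n) F ⊗[F] Matrix (Fin n) (Fin n) F) :=
  TensorProduct.map (conjLin F X) (conjLin F X)

/-- `Ω₀ = Σᵢ Eᵢᵢ ⊗ Eᵢᵢ − (1/n)·(I ⊗ I)`, the Cartan part of the Casimir
element of `sl(n)`. -/
def Omega0 (F : Type*) [Field F] (n : ℕ) :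
    Matrix (Fin n) (Fin n) F ⊗[F] Matrix (Fin n) (Fin n) F :=
  (∑ i : Fin n, Matrix.single i i (1 : F) ⊗ₜ[F] Matrix.single i i (1 : F))
    - (n : F)⁻¹ • ((1 : Matrix (Fin n) (Fin n) F) ⊗ₜ[F] (1 : Matrix (Fin n) (Fin n) F))

/-- The Drinfeld–Jimbo `r`-matrix `r_DJ = Σ_{i<j} E_ij ⊗ E_ji + (1/2)·Ω₀`. -/
def rDJ (F : Type*) [Field F] (n : ℕ) :
    Matrix (Fin n) (Fin n) F ⊗[F] Matrix (Fin n) (Fin n) F :=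
  (∑ i : Fin n, ∑ j : Fin n,
      if (i : ℕ) < (j : ℕ) then
        Matrix.single i j (1 : F) ⊗ₜ[F] Matrix.single j i (1 : F)
      else 0)
    + (2⁻¹ : F) • Omega0 F n

/-! ### Auxiliary machinery -/

section Aux

variable {F : Type*} [Field F] {n : ℕ}

/-- The entry functional `m ↦ m a b`. -/
def entryLin (F : Type*) [Field F] {n : ℕ} (a b : Fin n) :
    Matrix (Fin n) (Fin n) F →ₗ[F] F where
  toFun m := m a b
  map_add' := by intros; simp
  map_smul' := by intros; simp

/-- The coordinate functional `x ⊗ y ↦ x a e * y b f` on the tensor square. -/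
def pairLin (F : Type*) [Field F] {n : ℕ} (a e b f : Fin n) :
    (Matrix (Fin n) (Fin n) F ⊗[F] Matrix (Fin n) (Fin n) F) →ₗ[F] F :=
  TensorProduct.lift ((LinearMap.mul F F).compl₁₂ (entryLin F a e) (entryLin F b f))

@[simp] lemma pairLin_tmul (a e b f : Fin n) (x y : Matrix (Fin n) (Fin n) F) :
    pairLin F a e b f (x ⊗ₜ[F] y) = x a e * y b f := rfl

lemma mul_stdBasis_apply (M : Matrix (Fin n) (Fin n) F) (i j a e : Fin n) :
    (M * Matrix.single i j (1 : F)) a e = if e = j then M a i else 0 := by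
  rcases eq_or_ne e j with h | h
  · subst h; simp [Matrix.mul_single_apply_same]
  · simp [h]

lemma stdBasis_mul_apply (M : Matrix (Fin n) (Fin n) F) (i j a e : Fin n) :
    (Matrix.single i j (1 : F) * M) a e = if a = i then M j e else 0 := by
  rcases eq_or_ne a i with h | h
  · subst h; simp [Matrix.single_mul_apply_same]
  · simp [h]

lemma adT_eq_conj {C : Matrix (Fin n) (Fin n) F}
    (t : Matrix (Fin n) (Fin n) F ⊗[F] Matrix (Fin n) (Fin n) F) :
    AdT F C t = (C ⊗ₜ[F] C) * t * (C⁻¹ ⊗ₜ[F] C⁻¹) := by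
  induction t using TensorProduct.induction_on with
  | zero => simp
  | tmul a b =>
      simp [AdT, conjLin, Algebra.TensorProduct.tmul_mul_tmul, Matrix.mul_assoc]
  | add x y hx hy => simp [mul_add, add_mul, hx, hy]

lemma comm_of_adT {C : Matrix (Fin n) (Fin n) F} (hC : IsUnit C)
    {r : Matrix (Fin n) (Fin n) F ⊗[F] Matrix (Fin n) (Fin n) F}
    (h : AdT F C r = r) :
    (C ⊗ₜ[F] C) * r = r * (C ⊗ₜ[F] C) := by
  have hdet : IsUnit C.det := (Matrix.isUnit_iff_isUnit_det C).mp hC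
  have h1 : (C⁻¹ ⊗ₜ[F] C⁻¹) * (C ⊗ₜ[F] C) = 1 := by
    rw [Algebra.TensorProduct.tmul_mul_tmul, Matrix.nonsing_inv_mul _ hdet]
    rfl
  rw [adT_eq_conj] at h
  calc (C ⊗ₜ[F] C) * r = (C ⊗ₜ[F] C) * r * ((C⁻¹ ⊗ₜ[F] C⁻¹) * (C ⊗ₜ[F] C)) := by
        rw [h1, mul_one]
    _ = ((C ⊗ₜ[F] C) * r * (C⁻¹ ⊗ₜ[F] C⁻¹)) * (C ⊗ₜ[F] C) := (mul_assoc _ _ _).symm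
    _ = r * (C ⊗ₜ[F] C) := by rw [h]

lemma pair_mul_left (C : Matrix (Fin n) (Fin n) F) (a e b f : Fin n) :
    pairLin F a e b f ((C ⊗ₜ[F] C) * rDJ F n) =
      (if (f : ℕ) < (e : ℕ) then C a f * C b e else 0)
      + 2⁻¹ * ((if e = f then C a e * C b e else 0) - (n : F)⁻¹ * (C a e * C b f)) := by
  rw [rDJ, mul_add, map_add]
  congr 1
  · calc pairLin F a e b f ((C ⊗ₜ[F] C) * ∑ i : Fin n, ∑ j : Fin n,
          if (i : ℕ) < (j : ℕ) then
            Matrix.single i j (1 : F) ⊗ₜ[F] Matrix.single j i (1 : F) else 0)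
        = ∑ i : Fin n, ∑ j : Fin n, (if (i : ℕ) < (j : ℕ) then
            (if e = j then C a i else 0) * (if f = i then C b j else 0) else 0) := by
          simp only [Finset.mul_sum, map_sum, mul_ite, mul_zero,
            apply_ite (pairLin F a e b f), map_zero,
            Algebra.TensorProduct.tmul_mul_tmul, pairLin_tmul, mul_stdBasis_apply]
      _ = if (f : ℕ) < (e : ℕ) then C a f * C b e else 0 := by
          rw [Finset.sum_eq_single f (fun x _ hx => by simp [Ne.symm hx]) (by simp)]
          rw [Finset.sum_eq_single e (fun x _ hx => by simp [Ne.symm hx]) (by simp)]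
          by_cases hfe : (f : ℕ) < (e : ℕ) <;> simp [hfe]
  · rw [mul_smul_comm, map_smul, smul_eq_mul]
    congr 1
    rw [Omega0, mul_sub, map_sub, Finset.mul_sum, map_sum]
    congr 1
    · calc (∑ i : Fin n, pairLin F a e b f
            ((C ⊗ₜ[F] C) * (Matrix.single i i (1:F) ⊗ₜ[F] Matrix.single i i (1:F))))
          = ∑ i : Fin n, (if e = i then C a i else 0) * (if f = i then C b i else 0) := by
            simp only [Algebra.TensorProduct.tmul_mul_tmul, pairLin_tmul, mul_stdBasis_apply]
        _ = if e = f then C a e * C b e else 0 := by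
            rw [Finset.sum_eq_single e (fun x _ hx => by simp [Ne.symm hx]) (by simp)]
            by_cases hef : e = f
            · subst hef; simp
            · simp [hef, Ne.symm hef]
    · rw [mul_smul_comm, map_smul, Algebra.TensorProduct.tmul_mul_tmul, mul_one, smul_eq_mul,
        pairLin_tmul]

lemma pair_mul_right (C : Matrix (Fin n) (Fin n) F) (a e b f : Fin n) :
    pairLin F a e b f (rDJ F n * (C ⊗ₜ[F] C)) =
      (if (a : ℕ) < (b : ℕ) then C b e * C a f else 0)
      + 2⁻¹ * ((if a = b then C a e * C a f else 0) - (n : F)⁻¹ * (C a e * C b f)) := by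
  rw [rDJ, add_mul, map_add]
  congr 1
  · calc pairLin F a e b f ((∑ i : Fin n, ∑ j : Fin n,
          if (i : ℕ) < (j : ℕ) then
            Matrix.single i j (1 : F) ⊗ₜ[F] Matrix.single j i (1 : F) else 0)
            * (C ⊗ₜ[F] C))
        = ∑ i : Fin n, ∑ j : Fin n, (if (i : ℕ) < (j : ℕ) then
            (if a = i then C j e else 0) * (if b = j then C i f else 0) else 0) := by
          simp only [Finset.sum_mul, map_sum, ite_mul, zero_mul,
            apply_ite (pairLin F a e b f), map_zero,
            Algebra.TensorProduct.tmul_mul_tmul, pairLin_tmul, stdBasis_mul_apply]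
      _ = if (a : ℕ) < (b : ℕ) then C b e * C a f else 0 := by
          rw [Finset.sum_eq_single a (fun x _ hx => by simp [Ne.symm hx]) (by simp)]
          rw [Finset.sum_eq_single b (fun x _ hx => by simp [Ne.symm hx]) (by simp)]
          by_cases hab : (a : ℕ) < (b : ℕ) <;> simp [hab]
  · rw [smul_mul_assoc, map_smul, smul_eq_mul]
    congr 1
    rw [Omega0, sub_mul, map_sub, Finset.sum_mul, map_sum]
    congr 1
    · calc (∑ i : Fin n, pairLin F a e b f
            ((Matrix.single i i (1:F) ⊗ₜ[F] Matrix.single i i (1:F)) * (C ⊗ₜ[F] C)))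
          = ∑ i : Fin n, (if a = i then C i e else 0) * (if b = i then C i f else 0) := by
            simp only [Algebra.TensorProduct.tmul_mul_tmul, pairLin_tmul, stdBasis_mul_apply]
        _ = if a = b then C a e * C a f else 0 := by
            rw [Finset.sum_eq_single a (fun x _ hx => by simp [Ne.symm hx]) (by simp)]
            by_cases hab : a = b
            · subst hab; simp
            · simp [hab, Ne.symm hab]
    · rw [smul_mul_assoc, map_smul, Algebra.TensorProduct.tmul_mul_tmul, one_mul, smul_eq_mul,
        pairLin_tmul]

/-- Any invertible matrix whose conjugation fixes `r_DJ` is diagonal. -/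
lemma diagonal_of_fix [CharZero F] {C : Matrix (Fin n) (Fin n) F} (hC : IsUnit C)
    (h : AdT F C (rDJ F n) = rDJ F n) :
    ∀ i j : Fin n, i ≠ j → C i j = 0 := by
  have hcomm := comm_of_adT hC h
  have hhalf : (2 : F) * 2⁻¹ = 1 := mul_inv_cancel₀ two_ne_zero
  have E : ∀ a b e f : Fin n,
      2 * (if (f : ℕ) < (e : ℕ) then C a f * C b e else 0)
        + (if e = f then C a e * C b e else 0)
      = 2 * (if (a : ℕ) < (b : ℕ) then C b e * C a f else 0)
        + (if a = b then C a e * C a f else 0) := by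
    intro a b e f
    have h0 := congrArg (pairLin F a e b f) hcomm
    rw [pair_mul_left, pair_mul_right] at h0
    linear_combination 2 * h0 - ((if e = f then C a e * C b e else 0)
      - (if a = b then C a e * C a f else 0)) * hhalf
  have hdet : C.det ≠ 0 := ((Matrix.isUnit_iff_isUnit_det C).mp hC).ne_zero
  have hrow : ∀ a e f : Fin n, e ≠ f → C a e * C a f = 0 := by
    intro a e f hef
    have E1 := E a a e f
    rw [if_neg (lt_irrefl _), if_neg hef, if_pos rfl] at E1
    by_cases hfe : (f : ℕ) < (e : ℕ)
    · rw [if_pos hfe] at E1; linear_combination E1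
    · rw [if_neg hfe] at E1; linear_combination -E1
  have hcol : ∀ a b e : Fin n, a ≠ b → C a e * C b e = 0 := by
    intro a b e hab
    have E1 := E a b e e
    rw [if_neg (lt_irrefl _), if_neg hab, if_pos rfl] at E1
    by_cases hab2 : (a : ℕ) < (b : ℕ)
    · rw [if_pos hab2] at E1; linear_combination -E1
    · rw [if_neg hab2] at E1; linear_combination E1
  have hrownz : ∀ a : Fin n, ∃ e, C a e ≠ 0 := by
    intro a
    by_contra hc
    push_neg at hc
    exact hdet (Matrix.det_eq_zero_of_row_eq_zero a hc)
  choose π hπ using hrownz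
  have hmono : StrictMono π := by
    intro a b hab
    have habn : (a : ℕ) < (b : ℕ) := hab
    have habne : a ≠ b := Fin.ne_of_lt hab
    by_contra hnot
    rcases eq_or_ne (π a) (π b) with hpe | hpne
    · exact hπ b (by
        have := hcol a b (π a) habne
        rcases mul_eq_zero.mp this with h | h
        · exact absurd h (hπ a)
        · rw [hpe] at h; exact h)
    · have E1 := E a b (π b) (π a)
      have hfe : ¬ ((π a : ℕ) < (π b : ℕ)) := fun hc => hnot hc
      rw [if_neg hfe, if_neg (Ne.symm hpne), if_pos habn, if_neg habne] at E1
      have : C b (π b) * C a (π a) = 0 := by linear_combination -E1 / 2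
      rcases mul_eq_zero.mp this with h | h
      · exact hπ b h
      · exact hπ a h
  have hid : ∀ a, π a = a := by
    have hsurj : Function.Surjective π := Finite.injective_iff_surjective.mp hmono.injective
    have huniq : StrictMono.orderIsoOfSurjective π hmono hsurj = OrderIso.refl (Fin n) :=
      Subsingleton.elim _ _
    intro a
    have := congrFun (StrictMono.coe_orderIsoOfSurjective π hmono hsurj) a
    rw [huniq] at this
    exact this.symm
  intro i j hij
  by_contra hcij
  have hne : j ≠ π i := by rw [hid i]; exact hij.symm
  have h0 := hrow i j (π i) hne
  rcases mul_eq_zero.mp h0 with h | h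
  · exact hcij h
  · exact hπ i h

lemma diag_inv (d : Fin n → F) (hd : ∀ i, d i ≠ 0) :
    (Matrix.diagonal d)⁻¹ = Matrix.diagonal (fun i => (d i)⁻¹) := by
  apply Matrix.inv_eq_right_inv
  rw [Matrix.diagonal_mul_diagonal,
    show (fun i => d i * (d i)⁻¹) = fun _ => (1 : F) from funext fun i => mul_inv_cancel₀ (hd i),
    Matrix.diagonal_one]

lemma conj_diag_std (d : Fin n → F) (hd : ∀ i, d i ≠ 0) (i j : Fin n) :
    conjLin F (Matrix.diagonal d) (Matrix.single i j (1 : F))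
      = (d i * (d j)⁻¹) • Matrix.single i j (1 : F) := by
  have : conjLin F (Matrix.diagonal d) (Matrix.single i j (1 : F))
      = Matrix.diagonal d * (Matrix.single i j (1 : F) * (Matrix.diagonal d)⁻¹) := rfl
  rw [this, diag_inv d hd]
  ext a b
  rw [Matrix.smul_apply, Matrix.diagonal_mul, Matrix.mul_diagonal, smul_eq_mul]
  rcases eq_or_ne a i with rfl | h1
  · rcases eq_or_ne b j with rfl | h2
    · simp only [Matrix.single_apply_same]; ring
    · simp [Matrix.single, h2, Ne.symm h2]
  · simp [Matrix.single, h1, Ne.symm h1]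

lemma conj_diag_one (d : Fin n → F) (hd : ∀ i, d i ≠ 0) :
    conjLin F (Matrix.diagonal d) (1 : Matrix (Fin n) (Fin n) F) = 1 := by
  have : conjLin F (Matrix.diagonal d) (1 : Matrix (Fin n) (Fin n) F)
      = Matrix.diagonal d * ((1 : Matrix (Fin n) (Fin n) F) * (Matrix.diagonal d)⁻¹) := rfl
  rw [this, one_mul, diag_inv d hd, Matrix.diagonal_mul_diagonal,
    show (fun i => d i * (d i)⁻¹) = fun _ => (1 : F) from funext fun i => mul_inv_cancel₀ (hd i),
    Matrix.diagonal_one]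

/-- Conjugation by an invertible diagonal matrix fixes `r_DJ`. -/
lemma adT_diagonal (d : Fin n → F) (hd : ∀ i, d i ≠ 0) :
    AdT F (Matrix.diagonal d) (rDJ F n) = rDJ F n := by
  rw [rDJ, Omega0, map_add, map_smul, map_sub, map_smul]
  simp only [map_sum]
  congr 1
  · refine Finset.sum_congr rfl fun i _ => Finset.sum_congr rfl fun j _ => ?_
    by_cases hij : (i : ℕ) < (j : ℕ)
    · rw [if_pos hij, AdT, TensorProduct.map_tmul, conj_diag_std d hd, conj_diag_std d hd,
        TensorProduct.tmul_smul, ← TensorProduct.smul_tmul', smul_smul,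
        show d j * (d i)⁻¹ * (d i * (d j)⁻¹) = 1 by field_simp [hd i, hd j], one_smul]
    · rw [if_neg hij]; exact map_zero _
  · congr 1
    congr 1
    · refine Finset.sum_congr rfl fun i _ => ?_
      rw [AdT, TensorProduct.map_tmul, conj_diag_std d hd,
        TensorProduct.tmul_smul, ← TensorProduct.smul_tmul', smul_smul,
        show d i * (d i)⁻¹ * (d i * (d i)⁻¹) = 1 by field_simp [hd i], one_smul]
    · congr 1
      rw [AdT, TensorProduct.map_tmul, conj_diag_one d hd]

end Aux

/-! ### Galois theory input -/

instance : CharZero K := charZero_of_injective_algebraMap (algebraMap ℂ K).injective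
instance : CharZero Kbar := charZero_of_injective_algebraMap (algebraMap K Kbar).injective

/-- An element of `K̄` fixed by every `K`-automorphism lies in `K`. -/
lemma fixed_mem_range (x : Kbar) (hfix : ∀ σ : Kbar ≃ₐ[K] Kbar, σ x = x) :
    x ∈ (algebraMap K Kbar).range := by
  have hint : IsIntegral K x := Algebra.IsIntegral.isIntegral x
  set p := minpoly K x with hp
  have hp0 : p ≠ 0 := minpoly.ne_zero hint
  have hsep : p.Separable := (minpoly.irreducible hint).separable
  set P := p.map (algebraMap K Kbar) with hP
  have hP0 : P ≠ 0 := Polynomial.map_ne_zero hp0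
  have hPsep : P.Separable := hsep.map
  have hnodup : P.roots.Nodup := Polynomial.nodup_roots hPsep
  have hsplit : P.roots.card = P.natDegree :=
    (Polynomial.splits_iff_card_roots.mp
      (IsAlgClosed.splits P))
  have hdeg : P.natDegree = p.natDegree := p.natDegree_map _
  have hroots : ∀ z ∈ P.roots, z = x := by
    intro z hz
    have hzero : Polynomial.aeval z p = 0 := by
      have := (Polynomial.mem_roots hP0).mp hz
      rw [Polynomial.aeval_def, ← Polynomial.eval_map]
      exact this
    obtain ⟨σ, hσ⟩ := minpoly.exists_algEquiv_of_root' (Algebra.IsAlgebraic.isAlgebraic x) hzero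
    rw [← hσ]
    exact hfix σ
  have hxmem : x ∈ P.roots := by
    rw [Polynomial.mem_roots hP0]
    show Polynomial.eval x P = 0
    rw [hP, Polynomial.eval_map, ← Polynomial.aeval_def, minpoly.aeval]
  classical
  have hcard : P.roots.card ≤ 1 := by
    rw [← Multiset.count_eq_card.mpr (fun z hz => (hroots z hz).symm)]
    exact Multiset.nodup_iff_count_le_one.mp hnodup x
  have hdeg1 : p.natDegree = 1 := by
    have h1 : 1 ≤ p.natDegree := minpoly.natDegree_pos hint
    omega
  rw [← minpoly.natDegree_eq_one_iff]
  exact hdeg1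

set_option maxHeartbeats 1000000 in
/-- Triviality of the Belavin–Drinfeld cohomology `H¹_BD(r_DJ)` for `sl(n)`:
any Belavin–Drinfeld cocycle `X` for `r_DJ` factors as `X = Q·C` with `Q`
defined over `K` and `C` in the centralizer of `r_DJ`. -/
theorem statement4 (n : ℕ) (hn : 2 ≤ n)
    (X : Matrix (Fin n) (Fin n) Kbar) (hX : IsUnit X)
    (h : ∀ σ : Kbar ≃ₐ[K] Kbar,
      AdT Kbar (X⁻¹ * X.map σ) (rDJ Kbar n) = rDJ Kbar n) :
    ∃ Q C : Matrix (Fin n) (Fin n) Kbar,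
      IsUnit Q ∧ (∀ i j, Q i j ∈ (algebraMap K Kbar).range) ∧
      IsUnit C ∧ AdT Kbar C (rDJ Kbar n) = rDJ Kbar n ∧
      X = Q * C := by
  classical
  have hdetX : IsUnit X.det := (Matrix.isUnit_iff_isUnit_det X).mp hX
  have hXinv : IsUnit X⁻¹ :=
    ⟨⟨X⁻¹, X, Matrix.nonsing_inv_mul X hdetX, Matrix.mul_nonsing_inv X hdetX⟩, rfl⟩
  have hcolnz : ∀ j : Fin n, ∃ i, X i j ≠ 0 := by
    intro j
    by_contra hc
    push_neg at hc
    exact hdetX.ne_zero (Matrix.det_eq_zero_of_column_eq_zero j hc)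
  choose i0 hi0 using hcolnz
  set c : Fin n → Kbar := fun j => X (i0 j) j with hcdef
  have hcnz : ∀ j, c j ≠ 0 := fun j => hi0 j
  -- each cocycle value is a unit
  have hCunit : ∀ σ : Kbar ≃ₐ[K] Kbar, IsUnit (X⁻¹ * X.map σ) := by
    intro σ
    refine hXinv.mul ?_
    rw [Matrix.isUnit_iff_isUnit_det]
    have hmapdet : (X.map σ).det = σ X.det :=
      (RingHom.map_det (σ : Kbar →+* Kbar) X).symm
    rw [hmapdet]
    exact hdetX.map (σ : Kbar →+* Kbar)
  -- off-diagonal entries of the cocycle values vanish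
  have hCdiag : ∀ σ : Kbar ≃ₐ[K] Kbar, ∀ a b : Fin n, a ≠ b → (X⁻¹ * X.map σ) a b = 0 :=
    fun σ => diagonal_of_fix (hCunit σ) (h σ)
  -- the basic entrywise relation
  have hentry : ∀ σ : Kbar ≃ₐ[K] Kbar, ∀ i j : Fin n,
      σ (X i j) = X i j * (X⁻¹ * X.map σ) j j := by
    intro σ i j
    have hXσ : X.map σ = X * (X⁻¹ * X.map σ) := by
      rw [← Matrix.mul_assoc, Matrix.mul_nonsing_inv X hdetX, one_mul]
    calc σ (X i j) = (X.map σ) i j := rfl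
      _ = (X * (X⁻¹ * X.map σ)) i j := by rw [← hXσ]
      _ = ∑ k, X i k * (X⁻¹ * X.map σ) k j := Matrix.mul_apply
      _ = X i j * (X⁻¹ * X.map σ) j j :=
        Finset.sum_eq_single j (fun k _ hk => by rw [hCdiag σ k j hk, mul_zero]) (by simp)
  have hd : ∀ (σ : Kbar ≃ₐ[K] Kbar) (j : Fin n), (X⁻¹ * X.map σ) j j ≠ 0 := by
    intro σ j hzero
    have h2 := hentry σ (i0 j) j
    rw [hzero, mul_zero] at h2
    exact hcnz j (σ.injective (by rw [h2, map_zero]))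
  -- the rational part
  set Q : Matrix (Fin n) (Fin n) Kbar := Matrix.of fun i j => X i j * (c j)⁻¹ with hQdef
  have hQfix : ∀ i j, ∀ σ : Kbar ≃ₐ[K] Kbar, σ (Q i j) = Q i j := by
    intro i j σ
    have h1 := hentry σ i j
    have h2 := hentry σ (i0 j) j
    show σ (X i j * (X (i0 j) j)⁻¹) = X i j * (X (i0 j) j)⁻¹
    rw [map_mul, map_inv₀, h1, h2, mul_inv,
      show X i j * ((X⁻¹ * X.map ⇑σ) j j) * ((X (i0 j) j)⁻¹ * ((X⁻¹ * X.map ⇑σ) j j)⁻¹)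
          = X i j * (X (i0 j) j)⁻¹ * (((X⁻¹ * X.map ⇑σ) j j) * ((X⁻¹ * X.map ⇑σ) j j)⁻¹) by ring,
      mul_inv_cancel₀ (hd σ j), mul_one]
  have hQmem : ∀ i j, Q i j ∈ (algebraMap K Kbar).range :=
    fun i j => fixed_mem_range _ (fun σ => hQfix i j σ)
  have hXQC : X = Q * Matrix.diagonal c := by
    ext i j
    rw [Matrix.mul_diagonal]
    show X i j = X i j * (c j)⁻¹ * c j
    rw [inv_mul_cancel_right₀ (hcnz j)]
  have hDunit : IsUnit (Matrix.diagonal c) := by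
    rw [Matrix.isUnit_iff_isUnit_det, Matrix.det_diagonal]
    exact (Finset.prod_ne_zero_iff.mpr fun j _ => hcnz j).isUnit
  have hQunit : IsUnit Q := by
    rw [Matrix.isUnit_iff_isUnit_det]
    apply isUnit_of_mul_isUnit_left (y := (Matrix.diagonal c).det)
    rw [← Matrix.det_mul, ← hXQC]
    exact hdetX
  exact ⟨Q, Matrix.diagonal c, hQunit, hQmem, hDunit, adT_diagonal c hcnz, hXQC⟩
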